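/- Let K be a compact topological space and B a complex unital Banach algebra. For a continuous function f : K → B, the spectrum of f in the Banach algebra C(K, B) equals the union over x ∈ K of the spectra σ(f(x)) in B. -/
import Mathlib

/-- For a compact space `K` and a complex unital Banach algebra `B`, the spectrum of
`f ∈ C(K, B)` is the union of the spectra of the values `f x`. -/
theorem spectrum_continuousMap_eq_iUnion {K : Type*} [TopologicalSpace K] [CompactSpace K]
    {B : Type*} [NormedRing B] [NormedAlgebra ℂ B] [CompleteSpace B]
    (f : C(K, B)) :
    spectrum ℂ f = ⋃ x : K, spectrum ℂ (f x) := by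
  ext z
  simp only [Set.mem_iUnion, spectrum.mem_iff, ContinuousMap.isUnit_iff_forall_isUnit,
    not_forall]
  constructor
  · rintro ⟨x, hx⟩
    exact ⟨x, by simpa [Algebra.algebraMap_eq_smul_one] using hx⟩
  · rintro ⟨x, hx⟩
    exact ⟨x, by simpa [Algebra.algebraMap_eq_smul_one] using hx⟩
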